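/- For the gauge field constructed via u = exp(v/2 + iθ), A₁ = -Re{2i ∂̄ ln u}, A₂ = -Im{2i ∂̄ ln u}, the covariant derivatives satisfy D₁u = u ∂v and D₂u = i u ∂v where ∂ = (∂₁ - i∂₂)/2, and consequently |D₁u|² + |D₂u|² = (1/2)|∇v|² e^v away from the zeros and poles of u. -/

import Mathlib

/-- Partial derivative `∂₁` of a complex-valued function on `ℂ ≅ ℝ²`. -/
noncomputable def pd1 (g : ℂ → ℂ) (z : ℂ) : ℂ := fderiv ℝ g z 1

/-- Partial derivative `∂₂` of a complex-valued function on `ℂ ≅ ℝ²`. -/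
noncomputable def pd2 (g : ℂ → ℂ) (z : ℂ) : ℂ := fderiv ℝ g z Complex.I

/-- The operator `∂̄ = (∂₁ + i∂₂)/2`. -/
noncomputable def dbar (g : ℂ → ℂ) (z : ℂ) : ℂ := (pd1 g z + Complex.I * pd2 g z) / 2

/-- Partial derivative `∂₁` of a real-valued function on `ℂ ≅ ℝ²`. -/
noncomputable def rd1 (v : ℂ → ℝ) (z : ℂ) : ℝ := fderiv ℝ v z 1

/-- Partial derivative `∂₂` of a real-valued function on `ℂ ≅ ℝ²`. -/
noncomputable def rd2 (v : ℂ → ℝ) (z : ℂ) : ℝ := fderiv ℝ v z Complex.I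

/-- For `u = exp(v/2 + iθ)`, `A₁ = -Re{2i ∂̄ ln u}`, `A₂ = -Im{2i ∂̄ ln u}`
(so `2i ∂̄ ln u = 2i (∂̄u)/u`), the covariant derivatives `D_j u = ∂_j u - i A_j u`
satisfy `D₁u = u ∂v` and `D₂u = i u ∂v`, where `∂ = (∂₁ - i∂₂)/2`; consequently
`|D₁u|² + |D₂u|² = (1/2)|∇v|² e^v` away from the zeros and poles of `u`. -/
theorem stmt19 (Ω : Set ℂ) (hΩ : IsOpen Ω) (v θ : ℂ → ℝ)
    (hv : ∀ z ∈ Ω, DifferentiableAt ℝ v z)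
    (hθ : ∀ z ∈ Ω, DifferentiableAt ℝ θ z)
    (u : ℂ → ℂ)
    (hu : ∀ z ∈ Ω, u z = Complex.exp ((v z : ℂ) / 2 + (θ z : ℂ) * Complex.I))
    (A₁ A₂ : ℂ → ℝ)
    (hA₁ : ∀ z ∈ Ω, A₁ z = -(2 * Complex.I * dbar u z / u z).re)
    (hA₂ : ∀ z ∈ Ω, A₂ z = -(2 * Complex.I * dbar u z / u z).im)
    (D₁ D₂ : ℂ → ℂ)
    (hD₁ : ∀ z ∈ Ω, D₁ z = pd1 u z - Complex.I * (A₁ z : ℂ) * u z)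
    (hD₂ : ∀ z ∈ Ω, D₂ z = pd2 u z - Complex.I * (A₂ z : ℂ) * u z) :
    ∀ z ∈ Ω,
      D₁ z = u z * (((rd1 v z : ℂ) - Complex.I * (rd2 v z : ℂ)) / 2) ∧
      D₂ z = Complex.I * u z * (((rd1 v z : ℂ) - Complex.I * (rd2 v z : ℂ)) / 2) ∧
      ‖D₁ z‖ ^ 2 + ‖D₂ z‖ ^ 2 =
        (1 / 2) * ((rd1 v z) ^ 2 + (rd2 v z) ^ 2) * Real.exp (v z) := by
  intro z hz
  have hI2 : Complex.I ^ 2 = -1 := Complex.I_sq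
  have hI3 : Complex.I ^ 3 = -Complex.I := by norm_num [pow_succ, Complex.I_sq]
  set a := rd1 v z with ha
  set b := rd2 v z with hb
  have hvz := (hv z hz).hasFDerivAt
  have hθz := (hθ z hz).hasFDerivAt
  have h1 : HasFDerivAt (fun w => (v w : ℂ)) (Complex.ofRealCLM.comp (fderiv ℝ v z)) z :=
    Complex.ofRealCLM.hasFDerivAt.comp z hvz
  have h2 : HasFDerivAt (fun w => (θ w : ℂ)) (Complex.ofRealCLM.comp (fderiv ℝ θ z)) z :=
    Complex.ofRealCLM.hasFDerivAt.comp z hθz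
  have hhalf : HasFDerivAt (fun w => (v w : ℂ) / 2)
      ((2:ℂ)⁻¹ • Complex.ofRealCLM.comp (fderiv ℝ v z)) z := by
    simpa [div_eq_inv_mul, smul_eq_mul, Pi.smul_def] using h1.const_smul ((2:ℂ)⁻¹)
  have hf := hhalf.add (h2.mul_const Complex.I)
  have hg := hf.cexp
  set U := Complex.exp ((v z : ℂ) / 2 + (θ z : ℂ) * Complex.I) with hUdef
  have huz : u z = U := hu z hz
  have hU0 : U ≠ 0 := Complex.exp_ne_zero _
  have hev : u =ᶠ[nhds z] (fun w => Complex.exp ((v w : ℂ) / 2 + (θ w : ℂ) * Complex.I)) :=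
    Filter.eventually_of_mem (hΩ.mem_nhds hz) (fun w hw => hu w hw)
  have hux := hg.congr_of_eventuallyEq hev
  have hp1 : pd1 u z = U * ((a : ℂ) / 2 + (rd1 θ z : ℂ) * Complex.I) := by
    rw [pd1, hux.fderiv]
    simp [ha, rd1]
    ring
  have hp2 : pd2 u z = U * ((b : ℂ) / 2 + (rd2 θ z : ℂ) * Complex.I) := by
    rw [pd2, hux.fderiv]
    simp [hb, rd2]
    ring
  set c := rd1 θ z
  set d := rd2 θ z
  have hdb : 2 * Complex.I * dbar u z / u z =
      (↑(-(c + b / 2)) : ℂ) + (↑(a / 2 - d) : ℂ) * Complex.I := by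
    rw [dbar, hp1, hp2, huz]
    field_simp
    push_cast
    ring_nf
    try simp only [hI3, hI2]
    try ring_nf
    try ring
  have hA1 : A₁ z = c + b / 2 := by rw [hA₁ z hz, hdb]; simp
  have hA2 : A₂ z = -(a / 2 - d) := by rw [hA₂ z hz, hdb]; simp
  have hD1' : D₁ z = u z * (((a : ℂ) - Complex.I * (b : ℂ)) / 2) := by
    rw [hD₁ z hz, hp1, hA1, huz]
    push_cast
    ring_nf
    try simp only [hI3, hI2]
    try ring_nf
    try ring
  have hD2' : D₂ z = Complex.I * u z * (((a : ℂ) - Complex.I * (b : ℂ)) / 2) := by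
    rw [hD₂ z hz, hp2, hA2, huz]
    push_cast
    ring_nf
    try simp only [hI3, hI2]
    try ring_nf
    try ring
  refine ⟨hD1', hD2', ?_⟩
  have habsU : ‖U‖ ^ 2 = Real.exp (v z) := by
    rw [hUdef, Complex.norm_exp]
    rw [sq, ← Real.exp_add]
    norm_num
  have habsw : ‖((a : ℂ) - Complex.I * (b : ℂ)) / 2‖ ^ 2 = (a ^ 2 + b ^ 2) / 4 := by
    rw [Complex.sq_norm, Complex.normSq_apply]
    simp [Complex.div_re, Complex.div_im, Complex.normSq_apply]
    ring
  rw [hD1', hD2', huz, norm_mul, norm_mul, norm_mul, Complex.norm_I]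
  rw [mul_pow, mul_pow, mul_pow, habsU, habsw]
  ring
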